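/- For every tree t in the free magma M on x with deg(t) = n ≥ 1, the number â(t) = n!·ω(n)·a(t) is a positive integer, equal to a product of Mersenne binomials over the inner nodes of t. -/

import Mathlib

def deg : FreeMagma Unit → ℕ
  | FreeMagma.of _ => 1
  | FreeMagma.mul t₁ t₂ => deg t₁ + deg t₂

def expCoeff : FreeMagma Unit → ℚ
  | FreeMagma.of _ => 1
  | FreeMagma.mul t₁ t₂ =>
      expCoeff t₁ * expCoeff t₂ / (2 ^ (deg (FreeMagma.mul t₁ t₂)) - 2)

/-- Mersenne factorial. -/
def mersenneFact (m : ℕ) : ℕ := ∏ i ∈ Finset.Icc 1 m, (2 ^ i - 1)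

/-- Mersenne binomial coefficient, as a rational number. -/
def mersenneBinom (n r : ℕ) : ℚ :=
  (mersenneFact n : ℚ) / ((mersenneFact r : ℚ) * (mersenneFact (n - r) : ℚ))

def omegaQ (n : ℕ) : ℚ := 2 ^ (n - 1) * (mersenneFact (n - 1) : ℚ) / (n.factorial : ℚ)

/-- `â(t) = n! · ω(n) · a(t)` where `n = deg t`. -/
def ahat (t : FreeMagma Unit) : ℚ :=
  ((deg t).factorial : ℚ) * omegaQ (deg t) * expCoeff t

/-- Product of Mersenne binomials over the inner nodes of a tree. -/
def innerProd : FreeMagma Unit → ℚ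
  | FreeMagma.of _ => 1
  | FreeMagma.mul t₁ t₂ =>
      mersenneBinom (deg t₁ + deg t₂ - 2) (deg t₁ - 1) * innerProd t₁ * innerProd t₂

lemma mersenneFact_zero : mersenneFact 0 = 1 := rfl

lemma mersenneFact_succ (m : ℕ) :
    mersenneFact (m + 1) = mersenneFact m * (2 ^ (m + 1) - 1) := by
  unfold mersenneFact
  rw [Finset.prod_Icc_succ_top (by omega)]

lemma mersenneFact_pos (m : ℕ) : 0 < mersenneFact m := by
  induction m with
  | zero => exact Nat.one_pos
  | succ k ih =>
      rw [mersenneFact_succ]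
      have : 0 < 2 ^ (k + 1) - 1 := by
        have := Nat.one_lt_two_pow (n := k + 1) (by omega)
        omega
      positivity

lemma mersenneFact_cast_succ (m : ℕ) :
    (mersenneFact (m + 1) : ℚ) = (mersenneFact m : ℚ) * (2 ^ (m + 1) - 1) := by
  rw [mersenneFact_succ]
  have h : (1 : ℕ) ≤ 2 ^ (m + 1) := Nat.one_le_two_pow
  push_cast [h]
  ring

lemma mersenneFact_cast_ne (m : ℕ) : (mersenneFact m : ℚ) ≠ 0 := by
  exact_mod_cast (mersenneFact_pos m).ne'

/-- Natural-number Mersenne binomial via q=2 Pascal recursion. -/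
def mB : ℕ → ℕ → ℕ
  | _, 0 => 1
  | 0, _ + 1 => 0
  | n + 1, r + 1 => mB n r + 2 ^ (r + 1) * mB n (r + 1)

lemma mB_zero_right (n : ℕ) : mB n 0 = 1 := by cases n <;> rfl

lemma mB_eq_zero {n r : ℕ} (h : n < r) : mB n r = 0 := by
  induction n generalizing r with
  | zero => cases r with
    | zero => omega
    | succ r => rfl
  | succ n ih =>
      cases r with
      | zero => omega
      | succ r =>
          show mB n r + 2 ^ (r + 1) * mB n (r + 1) = 0
          rw [ih (by omega), ih (by omega)]
          simp

lemma mB_pos {n r : ℕ} (h : r ≤ n) : 0 < mB n r := by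
  induction n generalizing r with
  | zero =>
      interval_cases r
      · exact Nat.one_pos
  | succ n ih =>
      cases r with
      | zero => rw [mB_zero_right]; exact Nat.one_pos
      | succ r =>
          show 0 < mB n r + 2 ^ (r + 1) * mB n (r + 1)
          have := ih (r := r) (by omega)
          omega

lemma two_pow_sub_one_ne (k : ℕ) : (2 : ℚ) ^ (k + 1) - 1 ≠ 0 := by
  have : (1 : ℚ) < 2 ^ (k + 1) := by
    apply one_lt_pow₀ (by norm_num) (Nat.succ_ne_zero k)
  exact sub_ne_zero_of_ne this.ne'

lemma mB_diag (n : ℕ) : mB n n = 1 := by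
  induction n with
  | zero => rfl
  | succ n ih =>
      show mB n n + 2 ^ (n + 1) * mB n (n + 1) = 1
      rw [ih, mB_eq_zero (Nat.lt_succ_self n)]
      ring

lemma mersenneBinom_eq_mB {n r : ℕ} (h : r ≤ n) : mersenneBinom n r = (mB n r : ℚ) := by
  induction n generalizing r with
  | zero =>
      interval_cases r
      simp [mersenneBinom, mB_zero_right, mersenneFact_zero]
  | succ n ih =>
      cases r with
      | zero =>
          simp [mersenneBinom, mB_zero_right, mersenneFact_zero,
            div_self (mersenneFact_cast_ne (n + 1))]
      | succ r =>
          show mersenneBinom (n + 1) (r + 1) = ((mB n r + 2 ^ (r + 1) * mB n (r + 1) : ℕ) : ℚ)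
          rcases eq_or_lt_of_le h with heq | hlt
          · -- r + 1 = n + 1
            have hrn : r = n := by omega
            subst hrn
            rw [mB_eq_zero (Nat.lt_succ_self r), mB_diag]
            unfold mersenneBinom
            rw [Nat.sub_self, mersenneFact_zero]
            push_cast
            rw [mul_one, div_self (mersenneFact_cast_ne (r + 1))]
            ring
          · have hr : r ≤ n := by omega
            have hr' : r + 1 ≤ n := by omega
            push_cast
            rw [← ih hr, ← ih hr']
            unfold mersenneBinom
            have e1 : n + 1 - (r + 1) = n - r := by omega
            have e2 : ∃ m, n - r = m + 1 := ⟨n - r - 1, by omega⟩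
            obtain ⟨m, hm⟩ := e2
            have e3 : n - (r + 1) = m := by omega
            rw [e1, e3, hm, mersenneFact_cast_succ n, mersenneFact_cast_succ r,
              mersenneFact_cast_succ m]
            have hnm : n = r + m + 1 := by omega
            subst hnm
            field_simp [mersenneFact_cast_ne, two_pow_sub_one_ne]
            ring

lemma deg_pos (t : FreeMagma Unit) : 1 ≤ deg t := by
  induction t using FreeMagma.rec with
  | of u => exact le_refl 1
  | mul t₁ t₂ ih₁ ih₂ => show 1 ≤ deg t₁ + deg t₂; omega

lemma ahat_of (u : Unit) : ahat (FreeMagma.of u) = 1 := by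
  simp [ahat, deg, expCoeff, omegaQ, mersenneFact_zero]

lemma ahat_mul (t₁ t₂ : FreeMagma Unit) :
    ahat (FreeMagma.mul t₁ t₂)
      = mersenneBinom (deg t₁ + deg t₂ - 2) (deg t₁ - 1) * ahat t₁ * ahat t₂ := by
  obtain ⟨a, ha⟩ : ∃ a, deg t₁ = a + 1 := ⟨deg t₁ - 1, by have := deg_pos t₁; omega⟩
  obtain ⟨b, hb⟩ : ∃ b, deg t₂ = b + 1 := ⟨deg t₂ - 1, by have := deg_pos t₂; omega⟩
  have hd : deg (FreeMagma.mul t₁ t₂) = a + b + 2 := by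
    show deg t₁ + deg t₂ = a + b + 2; omega
  have he : expCoeff (FreeMagma.mul t₁ t₂)
      = expCoeff t₁ * expCoeff t₂ / (2 ^ (a + b + 2) - 2) := by
    rw [expCoeff, hd]
  unfold ahat
  rw [hd, he, ha, hb]
  unfold omegaQ mersenneBinom
  have e1 : a + b + 2 - 1 = a + b + 1 := by omega
  have e2 : a + 1 - 1 = a := by omega
  have e3 : a + 1 + (b + 1) - 2 = a + b := by omega
  have e5 : b + 1 - 1 = b := by omega
  rw [e1, e2, e3, e5]
  have e4 : a + b - a = b := by omega
  rw [e4, mersenneFact_cast_succ (a + b)]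
  have hden : (2 : ℚ) ^ (a + b + 2) - 2 = 2 * (2 ^ (a + b + 1) - 1) := by ring
  rw [hden]
  have hf1 : ((a + b + 2).factorial : ℚ) ≠ 0 := Nat.cast_ne_zero.2 (Nat.factorial_ne_zero _)
  have hf2 : ((a + 1).factorial : ℚ) ≠ 0 := Nat.cast_ne_zero.2 (Nat.factorial_ne_zero _)
  have hf3 : ((b + 1).factorial : ℚ) ≠ 0 := Nat.cast_ne_zero.2 (Nat.factorial_ne_zero _)
  have hma := mersenneFact_cast_ne a
  have hmb := mersenneFact_cast_ne b
  field_simp [mersenneFact_cast_ne, two_pow_sub_one_ne]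
  ring

theorem ahat_pos_integer_eq_prod_mersenne_binomials (t : FreeMagma Unit) :
    (∃ k : ℕ, 0 < k ∧ ahat t = (k : ℚ)) ∧ ahat t = innerProd t := by
  have key : ∀ s : FreeMagma Unit, ahat s = innerProd s ∧ ∃ k : ℕ, 0 < k ∧ innerProd s = (k : ℚ) := by
    intro s
    induction s using FreeMagma.rec with
    | of u => exact ⟨by rw [ahat_of]; rfl, 1, Nat.one_pos, by simp [innerProd]⟩
    | mul t₁ t₂ ih₁ ih₂ =>
        obtain ⟨h1, k1, k1pos, hk1⟩ := ih₁
        obtain ⟨h2, k2, k2pos, hk2⟩ := ih₂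
        have hip : innerProd (FreeMagma.mul t₁ t₂)
            = mersenneBinom (deg t₁ + deg t₂ - 2) (deg t₁ - 1) * innerProd t₁ * innerProd t₂ := rfl
        have hle : deg t₁ - 1 ≤ deg t₁ + deg t₂ - 2 := by
          have := deg_pos t₁; have := deg_pos t₂; omega
        have hmb := mersenneBinom_eq_mB hle
        refine ⟨by rw [ahat_mul, h1, h2, hip], mB (deg t₁ + deg t₂ - 2) (deg t₁ - 1) * k1 * k2,
          ?_, ?_⟩
        · have := mB_pos hle; positivity
        · rw [hip, hmb, hk1, hk2]; push_cast; ring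
  obtain ⟨h, k, kpos, hk⟩ := key t
  exact ⟨⟨k, kpos, by rw [h, hk]⟩, h⟩
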